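/- Let P be the companion matrix of a primitive polynomial of degree k+h over F_q (1 ≤ h < k), and let k+1 ≤ m < k+h. With A = [I_k | (P^k)^{(k)}; 0 | (P^k)^{[k+1,m]}] and B = [I_k | 0; 0 | I_{k+h}^{[k+1,m]}] (both m×(2k+h)), the rank of the vertical stack of A and B equals exactly m + k; hence d_S(rs(A), rs(B)) = 2k. -/

import Mathlib

/-- The companion matrix of a monic polynomial of degree `k`. -/
def companionMat {F : Type*} [Field F] {k : ℕ} (a : Fin k → F) :
    Matrix (Fin k) (Fin k) F :=
  fun i j => if (i : ℕ) + 1 = k then -a j else if (j : ℕ) = (i : ℕ) + 1 then 1 else 0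

/-- The subspace distance `d_S(U,V) = dim(U+V) - dim(U∩V)`. -/
noncomputable def subspaceDist {𝔽 : Type*} [Field 𝔽] {n : ℕ}
    (U V : Submodule 𝔽 (Fin n → 𝔽)) : ℕ :=
  Module.finrank 𝔽 ↥(U ⊔ V) - Module.finrank 𝔽 ↥(U ⊓ V)

/-- auxiliary: left block generators -/
def auxGl (𝔽 : Type*) [Field 𝔽] (k h : ℕ) : Fin k → Fin (2 * k + h) → 𝔽 :=
  fun i j => if (j : ℕ) = (i : ℕ) then 1 else 0

/-- auxiliary: right block generators -/
def auxGr {𝔽 : Type*} [Field 𝔽] {k h m : ℕ} (hm2 : m < k + h)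
    (Q : Matrix (Fin (k + h)) (Fin (k + h)) 𝔽) : Fin m → Fin (2 * k + h) → 𝔽 :=
  fun i j =>
    if _ : k ≤ (j : ℕ) then
      Q ⟨(i : ℕ), by have := i.isLt; omega⟩ ⟨(j : ℕ) - k, by have := j.isLt; omega⟩
    else 0

/-- Let `P` be the companion matrix of a primitive polynomial of degree `k+h` over
`𝔽 = F_q` (`1 ≤ h < k`; primitivity rendered as: `P` has multiplicative order
`q^{k+h} - 1`), and let `k+1 ≤ m < k+h`.  With
`A = [I_k | (P^k)^{(k)} ; 0 | (P^k)^{[k+1,m]}]` and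
`B = [I_k | 0 ; 0 | I_{k+h}^{[k+1,m]}]` (both `m × (2k+h)`), the vertical stack of
`A` and `B` has rank exactly `m + k`; hence `d_S(rs A, rs B) = 2k`. -/
theorem stmt12 {𝔽 : Type*} [Field 𝔽] [Fintype 𝔽] {k h : ℕ}
    (hh1 : 1 ≤ h) (hhk : h < k)
    (q : ℕ) (hq : q = Fintype.card 𝔽)
    (co : Fin (k + h) → 𝔽) (P : Matrix (Fin (k + h)) (Fin (k + h)) 𝔽)
    (hP : P = companionMat co) (hprim : orderOf P = q ^ (k + h) - 1)
    (m : ℕ) (hm1 : k + 1 ≤ m) (hm2 : m < k + h)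
    (A B : Matrix (Fin m) (Fin (2 * k + h)) 𝔽)
    (hA : ∀ i : Fin m, ∀ j : Fin (2 * k + h),
      A i j =
        if hj : (j : ℕ) < k then (if (i : ℕ) = (j : ℕ) then 1 else 0)
        else (P ^ k) ⟨(i : ℕ), by have := i.isLt; omega⟩
          ⟨(j : ℕ) - k, by have := j.isLt; omega⟩)
    (hB : ∀ i : Fin m, ∀ j : Fin (2 * k + h),
      B i j =
        if (j : ℕ) < k then (if (i : ℕ) = (j : ℕ) then 1 else 0)
        else (if k ≤ (i : ℕ) ∧ (i : ℕ) = (j : ℕ) - k then 1 else 0)) :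
    (Matrix.fromRows A B).rank = m + k ∧
      subspaceDist (Submodule.span 𝔽 (Set.range A))
        (Submodule.span 𝔽 (Set.range B)) = 2 * k := by
  classical
  have hkm : k < m := by omega
  -- `P` is invertible
  have hq2 : 2 ≤ q := by rw [hq]; exact Fintype.one_lt_card
  have hord : orderOf P ≠ 0 := by
    rw [hprim]
    have : 2 ≤ q ^ (k + h) := le_trans hq2 (Nat.le_self_pow (by omega) q)
    omega
  have hPu : IsUnit P := by
    have h1 : IsUnit (P ^ orderOf P) := by
      rw [pow_orderOf_eq_one P]; exact isUnit_one
    exact (isUnit_pow_iff hord).mp h1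
  have hPk : IsUnit (P ^ k) := hPu.pow k
  -- rows of powers of `P`
  have rowP : ∀ t : ℕ, ∀ i c : Fin (k + h), (i : ℕ) + t < k + h →
      (P ^ t) i c = if (c : ℕ) = (i : ℕ) + t then 1 else 0 := by
    intro t
    induction t with
    | zero =>
      intro i c _
      simp only [pow_zero, Matrix.one_apply, Nat.add_zero]
      by_cases hic : i = c
      · subst hic; simp
      · rw [if_neg hic, if_neg (fun hc => hic (Fin.ext hc.symm))]
    | succ t ih =>
      intro i c hic
      have hi1 : (i : ℕ) + 1 < k + h := by omega
      have hPib : ∀ b : Fin (k + h), P i b = if (b : ℕ) = (i : ℕ) + 1 then 1 else 0 := by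
        intro b
        rw [hP]
        simp only [companionMat]
        rw [if_neg (by omega)]
      rw [pow_succ', Matrix.mul_apply]
      rw [Finset.sum_eq_single (⟨(i : ℕ) + 1, hi1⟩ : Fin (k + h))]
      · rw [hPib, if_pos rfl, one_mul,
          ih ⟨(i : ℕ) + 1, hi1⟩ c (by show (i : ℕ) + 1 + t < k + h; omega)]
        have hval : ((⟨(i : ℕ) + 1, hi1⟩ : Fin (k + h)) : ℕ) + t = (i : ℕ) + (t + 1) := by
          show (i : ℕ) + 1 + t = (i : ℕ) + (t + 1); omega
        rw [hval]
      · intro b _ hb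
        rw [hPib, if_neg (fun hbv => hb (Fin.ext hbv)), zero_mul]
      · intro habs; exact absurd (Finset.mem_univ _) habs
  have happ : ∀ (a a' b b' : Fin (k + h)), a = a' → b = b' →
      (P ^ k) a b = (P ^ k) a' b' := by
    intro a a' b b' ha hb; rw [ha, hb]
  set gl : Fin k → Fin (2 * k + h) → 𝔽 := auxGl 𝔽 k h with hgl_def
  set gr : Fin m → Fin (2 * k + h) → 𝔽 := auxGr hm2 (P ^ k) with hgr_def
  set emb : Fin m → Fin (k + h) := Fin.castLE (le_of_lt hm2) with hemb_def
  have hr : LinearIndependent 𝔽 (fun i => (P ^ k) i) :=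
    Matrix.linearIndependent_rows_iff_isUnit.mpr hPk
  have hrm : LinearIndependent 𝔽 ((fun i => (P ^ k) i) ∘ emb) :=
    hr.comp emb (Fin.castLE_injective _)
  -- independence of `gr`
  have hgr : LinearIndependent 𝔽 gr := by
    apply LinearIndependent.of_comp (LinearMap.funLeft 𝔽 𝔽
      (fun j : Fin (k + h) => (⟨k + (j : ℕ), by have := j.isLt; omega⟩ : Fin (2 * k + h))))
    have hkey : (⇑(LinearMap.funLeft 𝔽 𝔽
        (fun j : Fin (k + h) => (⟨k + (j : ℕ), by have := j.isLt; omega⟩ : Fin (2 * k + h)))) ∘ gr)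
        = (fun i => (P ^ k) i) ∘ emb := by
      funext i j
      simp only [Function.comp_apply, LinearMap.funLeft_apply, hgr_def, auxGr]
      rw [dif_pos (show k ≤ k + (j : ℕ) from Nat.le_add_right _ _)]
      exact happ _ _ _ _ (Fin.ext rfl)
        (Fin.ext (by show k + (j : ℕ) - k = (j : ℕ); omega))
    rw [hkey]
    exact hrm
  -- independence of `gl`
  have hgl : LinearIndependent 𝔽 gl := by
    apply LinearIndependent.of_comp (LinearMap.funLeft 𝔽 𝔽
      (fun j : Fin k => (⟨(j : ℕ), by have := j.isLt; omega⟩ : Fin (2 * k + h))))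
    have hkey : (⇑(LinearMap.funLeft 𝔽 𝔽
        (fun j : Fin k => (⟨(j : ℕ), by have := j.isLt; omega⟩ : Fin (2 * k + h)))) ∘ gl)
        = fun i => (1 : Matrix (Fin k) (Fin k) 𝔽) i := by
      funext i j
      simp only [Function.comp_apply, LinearMap.funLeft_apply, hgl_def, auxGl, Matrix.one_apply]
      by_cases hij : i = j
      · subst hij; simp
      · rw [if_neg (fun hv => hij (Fin.ext hv.symm)), if_neg hij]
    rw [hkey]
    exact Matrix.linearIndependent_rows_iff_isUnit.mpr isUnit_one
  -- disjointness of the spans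
  have hdis : Disjoint (Submodule.span 𝔽 (Set.range gl)) (Submodule.span 𝔽 (Set.range gr)) := by
    have h1 : Submodule.span 𝔽 (Set.range gl) ≤ LinearMap.ker (LinearMap.funLeft 𝔽 𝔽
        (fun j : Fin (k + h) => (⟨k + (j : ℕ), by have := j.isLt; omega⟩ : Fin (2 * k + h)))) := by
      rw [Submodule.span_le]
      rintro v ⟨i, rfl⟩
      simp only [SetLike.mem_coe, LinearMap.mem_ker]
      funext j
      simp only [LinearMap.funLeft_apply, hgl_def, auxGl, Pi.zero_apply]
      rw [if_neg (by show ¬ k + (j : ℕ) = (i : ℕ); have := i.isLt; omega)]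
    have h2 : Submodule.span 𝔽 (Set.range gr) ≤ LinearMap.ker (LinearMap.funLeft 𝔽 𝔽
        (fun j : Fin k => (⟨(j : ℕ), by have := j.isLt; omega⟩ : Fin (2 * k + h)))) := by
      rw [Submodule.span_le]
      rintro v ⟨i, rfl⟩
      simp only [SetLike.mem_coe, LinearMap.mem_ker]
      funext j
      simp only [LinearMap.funLeft_apply, hgr_def, auxGr, Pi.zero_apply]
      rw [dif_neg (by show ¬ k ≤ (j : ℕ); have := j.isLt; omega)]
    have hker : Disjoint
        (LinearMap.ker (LinearMap.funLeft 𝔽 𝔽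
          (fun j : Fin (k + h) => (⟨k + (j : ℕ), by have := j.isLt; omega⟩ : Fin (2 * k + h)))))
        (LinearMap.ker (LinearMap.funLeft 𝔽 𝔽
          (fun j : Fin k => (⟨(j : ℕ), by have := j.isLt; omega⟩ : Fin (2 * k + h))))) := by
      rw [Submodule.disjoint_def]
      intro v hv hv'
      rw [LinearMap.mem_ker] at hv hv'
      funext j
      by_cases hj : (j : ℕ) < k
      · have hthis := congrFun hv' ⟨(j : ℕ), hj⟩
        simp only [LinearMap.funLeft_apply, Pi.zero_apply] at hthis
        exact hthis
      · have hthis := congrFun hv ⟨(j : ℕ) - k, by have := j.isLt; omega⟩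
        simp only [LinearMap.funLeft_apply, Pi.zero_apply] at hthis
        have hvc : ∀ (a b : Fin (2 * k + h)), a = b → v a = v b := by
          intro a b hab; rw [hab]
        rw [Pi.zero_apply, ← hthis]
        exact hvc _ _ (Fin.ext (by show (j : ℕ) = k + ((j : ℕ) - k); omega))
    exact hker.mono h1 h2
  have hg : LinearIndependent 𝔽 (Sum.elim gl gr) := hgl.sum_type hgr hdis
  -- pointwise identities
  have hE1 : ∀ (i : Fin m) (hik : (i : ℕ) < k), A i = gl ⟨(i : ℕ), hik⟩ + gr i := by
    intro i hik
    funext j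
    rw [Pi.add_apply, hA i j]
    by_cases hj : (j : ℕ) < k
    · rw [dif_pos hj]
      simp only [hgl_def, hgr_def, auxGl, auxGr]
      rw [dif_neg (by omega), add_zero]
      split_ifs <;> first | rfl | (exfalso; omega)
    · rw [dif_neg hj]
      simp only [hgl_def, hgr_def, auxGl, auxGr]
      rw [dif_pos (by omega), if_neg (by have := i.isLt; omega), zero_add]
  have hE2 : ∀ (i : Fin m), ¬ (i : ℕ) < k → A i = gr i := by
    intro i hik
    funext j
    rw [hA i j]
    by_cases hj : (j : ℕ) < k
    · rw [dif_pos hj]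
      simp only [hgr_def, auxGr]
      rw [dif_neg (by omega), if_neg (by omega)]
    · rw [dif_neg hj]
      simp only [hgr_def, auxGr]
      rw [dif_pos (by omega)]
  have hE3 : ∀ (i : Fin m) (hik : (i : ℕ) < k), B i = gl ⟨(i : ℕ), hik⟩ := by
    intro i hik
    funext j
    rw [hB i j]
    simp only [hgl_def, auxGl]
    by_cases hj : (j : ℕ) < k
    · rw [if_pos hj]
      split_ifs <;> first | rfl | (exfalso; omega)
    · rw [if_neg hj, if_neg (by omega), if_neg (by omega)]
  have hE4 : ∀ (i : Fin m), ¬ (i : ℕ) < k →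
      B i = gr ⟨(i : ℕ) - k, by have := i.isLt; omega⟩ := by
    intro i hik
    funext j
    rw [hB i j]
    simp only [hgr_def, auxGr]
    by_cases hj : (j : ℕ) < k
    · rw [if_pos hj, dif_neg (by omega), if_neg (by omega)]
    · rw [if_neg hj, dif_pos (by omega)]
      rw [rowP k ⟨(i : ℕ) - k, by have := i.isLt; omega⟩
        ⟨(j : ℕ) - k, by have := j.isLt; omega⟩ (by show (i : ℕ) - k + k < k + h; have := i.isLt; omega)]
      have hv1 : ((⟨(i : ℕ) - k, by have := i.isLt; omega⟩ : Fin (k + h)) : ℕ) = (i : ℕ) - k := rfl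
      have hv2 : ((⟨(j : ℕ) - k, by have := j.isLt; omega⟩ : Fin (k + h)) : ℕ) = (j : ℕ) - k := rfl
      rw [hv1, hv2]
      split_ifs <;> first | rfl | (exfalso; omega)
  -- span equality
  have hspan : Submodule.span 𝔽 (Set.range A ∪ Set.range B)
      = Submodule.span 𝔽 (Set.range (Sum.elim gl gr)) := by
    rw [Set.Sum.elim_range]
    apply le_antisymm <;> rw [Submodule.span_le]
    · rintro v (⟨i, rfl⟩ | ⟨i, rfl⟩)
      · by_cases hik : (i : ℕ) < k
        · rw [hE1 i hik]
          exact add_mem (Submodule.subset_span (Or.inl ⟨_, rfl⟩))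
            (Submodule.subset_span (Or.inr ⟨i, rfl⟩))
        · rw [hE2 i hik]
          exact Submodule.subset_span (Or.inr ⟨i, rfl⟩)
      · by_cases hik : (i : ℕ) < k
        · rw [hE3 i hik]
          exact Submodule.subset_span (Or.inl ⟨_, rfl⟩)
        · rw [hE4 i hik]
          exact Submodule.subset_span (Or.inr ⟨_, rfl⟩)
    · rintro v (⟨i, rfl⟩ | ⟨i, rfl⟩)
      · rw [show gl i = B ⟨(i : ℕ), by omega⟩ from
          (hE3 ⟨(i : ℕ), by omega⟩ i.isLt).symm]
        exact Submodule.subset_span (Or.inr ⟨_, rfl⟩)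
      · by_cases hik : (i : ℕ) < k
        · have : gr i = A i - B i := by
            rw [hE1 i hik, hE3 i hik]
            abel
          rw [this]
          exact sub_mem (Submodule.subset_span (Or.inl ⟨_, rfl⟩))
            (Submodule.subset_span (Or.inr ⟨_, rfl⟩))
        · rw [← hE2 i hik]
          exact Submodule.subset_span (Or.inl ⟨_, rfl⟩)
  -- independence of rows of A
  have hAint : LinearIndependent 𝔽 A := by
    apply LinearIndependent.of_comp (LinearMap.funLeft 𝔽 𝔽
      (fun j : Fin (k + h) => (⟨k + (j : ℕ), by have := j.isLt; omega⟩ : Fin (2 * k + h))))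
    have hkey : (⇑(LinearMap.funLeft 𝔽 𝔽
        (fun j : Fin (k + h) => (⟨k + (j : ℕ), by have := j.isLt; omega⟩ : Fin (2 * k + h)))) ∘ A)
        = (fun i => (P ^ k) i) ∘ emb := by
      funext i j
      simp only [Function.comp_apply, LinearMap.funLeft_apply]
      change A i _ = _
      rw [hA]
      rw [dif_neg (by show ¬ (k + (j : ℕ) < k); omega)]
      exact happ _ _ _ _ (Fin.ext rfl)
        (Fin.ext (by show k + (j : ℕ) - k = (j : ℕ); omega))
    rw [hkey]
    exact hrm
  -- independence of rows of B
  have hBint : LinearIndependent 𝔽 B := by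
    apply LinearIndependent.of_comp (LinearMap.funLeft 𝔽 𝔽
      (fun i : Fin m => if hik : (i : ℕ) < k then (⟨(i : ℕ), by omega⟩ : Fin (2 * k + h))
        else ⟨(i : ℕ) + k, by have := i.isLt; omega⟩))
    have hkey : (⇑(LinearMap.funLeft 𝔽 𝔽
        (fun i : Fin m => if hik : (i : ℕ) < k then (⟨(i : ℕ), by omega⟩ : Fin (2 * k + h))
          else ⟨(i : ℕ) + k, by have := i.isLt; omega⟩)) ∘ B)
        = fun i => (1 : Matrix (Fin m) (Fin m) 𝔽) i := by
      funext i i'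
      simp only [Function.comp_apply, LinearMap.funLeft_apply, Matrix.one_apply]
      change B i _ = _
      beta_reduce
      by_cases hik : (i' : ℕ) < k
      · rw [dif_pos hik, hB]
        rw [if_pos (show ((⟨(i' : ℕ), by omega⟩ : Fin (2 * k + h)) : ℕ) < k from hik)]
        by_cases hii : i = i'
        · subst hii; simp
        · rw [if_neg (fun hv => hii (Fin.ext hv)), if_neg hii]
      · rw [dif_neg hik, hB]
        rw [if_neg (by show ¬ ((i' : ℕ) + k < k); omega)]
        by_cases hii : i = i'
        · subst hii
          rw [if_pos ⟨by omega, by show (i : ℕ) = (i : ℕ) + k - k; omega⟩, if_pos rfl]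
        · rw [if_neg, if_neg hii]
          rintro ⟨h1, h2⟩
          have h2' : (i : ℕ) = (i' : ℕ) + k - k := h2
          exact hii (Fin.ext (by omega))
    rw [hkey]
    exact Matrix.linearIndependent_rows_iff_isUnit.mpr isUnit_one
  -- finrank computations
  have hcard : Module.finrank 𝔽
      ↥(Submodule.span 𝔽 (Set.range A) ⊔ Submodule.span 𝔽 (Set.range B)) = k + m := by
    rw [← Submodule.span_union, hspan, finrank_span_eq_card hg]
    simp
  have hrkA : Module.finrank 𝔽 ↥(Submodule.span 𝔽 (Set.range A)) = m := by
    rw [finrank_span_eq_card hAint]; simp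
  have hrkB : Module.finrank 𝔽 ↥(Submodule.span 𝔽 (Set.range B)) = m := by
    rw [finrank_span_eq_card hBint]; simp
  have hsum := Submodule.finrank_sup_add_finrank_inf_eq
    (Submodule.span 𝔽 (Set.range A)) (Submodule.span 𝔽 (Set.range B))
  constructor
  · rw [Matrix.rank_eq_finrank_span_row]
    have hrange : Set.range (Matrix.fromRows A B).row = Set.range A ∪ Set.range B :=
      Set.Sum.elim_range A B
    rw [hrange, Submodule.span_union, hcard]
    omega
  · simp only [subspaceDist]
    rw [hrkA, hrkB, hcard] at hsum
    rw [hcard, show Module.finrank 𝔽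
      ↥(Submodule.span 𝔽 (Set.range A) ⊓ Submodule.span 𝔽 (Set.range B)) = m - k by omega]
    omega
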